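/- Let {r_k} be a sequence of positive reals satisfying φ'(r_{k+1})² (r_k − r_{k+1}) ≥ c for all k ≥ k̄, where c > 0 and φ(t) = (C/θ)t^θ with C > 0 and θ ∈ [1/2, 1). Then there exist d > 0 and Q ∈ (0,1) such that r_k ≤ r_{k̄} Q^{k−k̄} for all k ≥ k̄, i.e., r_k = O(e^{−d(k−k̄)}). -/

import Mathlib

theorem stmt17 (r : ℕ → ℝ) (hr : ∀ k, 0 < r k)
    (c C θ : ℝ) (hc : 0 < c) (hC : 0 < C) (hθ : θ ∈ Set.Ico (1 / 2 : ℝ) 1)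
    (kbar : ℕ)
    (hrec : ∀ k ≥ kbar, c ≤ (C * r (k + 1) ^ (θ - 1)) ^ 2 * (r k - r (k + 1))) :
    ∃ Q : ℝ, 0 < Q ∧ Q < 1 ∧ ∀ k ≥ kbar, r k ≤ r kbar * Q ^ (k - kbar) := by
  obtain ⟨hθ1, hθ2⟩ := hθ
  set R := r kbar with hR
  have hRpos : 0 < R := hr kbar
  have hRp : 0 < R ^ (1 - 2*θ) := Real.rpow_pos_of_pos hRpos _
  set b := c * R ^ (1 - 2*θ) / C ^ 2 with hb
  have hbpos : 0 < b := by positivity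
  have hQpos : (0:ℝ) < 1/(1+b) := by positivity
  refine ⟨1/(1+b), hQpos, ?_, ?_⟩
  · rw [div_lt_one (by linarith)]; linarith
  · have hdec : ∀ k ≥ kbar, r (k+1) ≤ r k := by
      intro k hk
      have h := hrec k hk
      nlinarith [sq_nonneg (C * r (k+1) ^ (θ-1)), hr (k+1)]
    have key : ∀ k ≥ kbar, r k ≤ R → r (k+1) ≤ (1/(1+b)) * r k := by
      intro k hk hkR
      set x := r (k+1) with hx
      have hxpos : 0 < x := hr (k+1)
      have hxR : x ≤ R := le_trans (hdec k hk) hkR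
      have h := hrec k hk
      have hsq : (C * x ^ (θ-1)) ^ 2 = C^2 * x ^ (2*θ-2) := by
        rw [mul_pow, sq (x ^ (θ-1)), ← Real.rpow_add hxpos]
        ring_nf
      rw [hsq] at h
      have hxp : (0:ℝ) < x ^ (2 - 2*θ) := Real.rpow_pos_of_pos hxpos _
      have h2 : c * x ^ (2 - 2*θ) ≤ C^2 * (r k - x) := by
        calc c * x ^ (2-2*θ) ≤ C^2 * x^(2*θ-2) * (r k - x) * x^(2-2*θ) :=
              mul_le_mul_of_nonneg_right h hxp.le
          _ = C^2 * (r k - x) * (x^(2*θ-2) * x^(2-2*θ)) := by ring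
          _ = C^2 * (r k - x) := by
              rw [← Real.rpow_add hxpos, show (2*θ-2)+(2-2*θ) = (0:ℝ) by ring,
                Real.rpow_zero, mul_one]
      have h3 : x ^ (2-2*θ) = x * x^(1-2*θ) := by
        rw [show (2:ℝ)-2*θ = 1 + (1-2*θ) by ring, Real.rpow_add hxpos, Real.rpow_one]
      have h4 : R ^ (1-2*θ) ≤ x ^ (1-2*θ) :=
        Real.rpow_le_rpow_of_nonpos hxpos hxR (by linarith)
      have h5 : c * (x * R ^ (1-2*θ)) ≤ C^2 * (r k - x) := by
        refine le_trans ?_ h2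
        rw [h3]
        have := mul_le_mul_of_nonneg_left h4 hxpos.le
        nlinarith
      have hbx : b * x ≤ r k - x := by
        rw [hb, div_mul_eq_mul_div, div_le_iff₀ (by positivity)]
        nlinarith
      rw [div_mul_eq_mul_div, one_mul, le_div_iff₀ (by linarith)]
      nlinarith
    intro k hk
    induction k, hk using Nat.le_induction with
    | base => simp [hR]
    | succ k hk ih =>
      have hpow1 : (1/(1+b))^(k-kbar) ≤ 1 :=
        pow_le_one₀ hQpos.le (by rw [div_le_one (by linarith)]; linarith)
      have hkR : r k ≤ R := by
        calc r k ≤ R * (1/(1+b))^(k-kbar) := ih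
          _ ≤ R * 1 := by
              exact mul_le_mul_of_nonneg_left hpow1 hRpos.le
          _ = R := mul_one R
      calc r (k+1) ≤ (1/(1+b)) * r k := key k hk hkR
        _ ≤ (1/(1+b)) * (R * (1/(1+b))^(k-kbar)) :=
            mul_le_mul_of_nonneg_left ih hQpos.le
        _ = R * (1/(1+b))^((k-kbar)+1) := by ring
        _ = R * (1/(1+b))^(k+1-kbar) := by rw [Nat.succ_sub hk]
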